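/- Let S be a bigraded staircase complex over F₂[W,Z] and let f: S → S be a chain map preserving the (gr_W, gr_Z)-bigrading which is a chain homotopy equivalence. Then f equals the identity map. -/

import Mathlib

noncomputable section

open MvPolynomial

/-- `R = F₂[W,Z]`. -/
abbrev R2 : Type := MvPolynomial (Fin 2) (ZMod 2)

def Wv : R2 := X 0
def Zv : R2 := X 1

/-- Coefficient of the monomial `W^p Z^q`. -/
def coeffAt (p q : ℕ) (f : R2) : ZMod 2 :=
  MvPolynomial.coeff (Finsupp.single (0 : Fin 2) p + Finsupp.single (1 : Fin 2) q) f

/-- The staircase differential as an endomorphism matrix of the total module on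
generators `x_0, …, x_{2n}`: `d(x_{2i+1}) = x_{2i}·W^{a_i} + x_{2i+2}·Z^{b_i}`,
`d(x_{2i}) = 0`. -/
def stairD (n : ℕ) (a b : Fin n → ℕ) :
    Matrix (Fin (2 * n + 1)) (Fin (2 * n + 1)) R2 :=
  fun j i =>
    if h : (i : ℕ) % 2 = 1 then
      if (j : ℕ) + 1 = (i : ℕ) then Wv ^ a ⟨(i : ℕ) / 2, by have := i.isLt; omega⟩
      else if (j : ℕ) = (i : ℕ) + 1 then Zv ^ b ⟨(i : ℕ) / 2, by have := i.isLt; omega⟩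
      else 0
    else 0

/-- A matrix `M` (representing an `R`-module map) is homogeneous of bidegree `(dW, dZ)`
with respect to generator bigradings, where `W` has bidegree `(−2,0)` and `Z` has
`(0,−2)`: every monomial `W^p Z^q` occurring in the `(j,i)` entry satisfies the
corresponding grading equations. -/
def hasBideg {k l : ℕ} (grWs grZs : Fin k → ℤ) (grWt grZt : Fin l → ℤ)
    (dW dZ : ℤ) (M : Matrix (Fin l) (Fin k) R2) : Prop :=
  ∀ (i : Fin k) (j : Fin l) (p q : ℕ), coeffAt p q (M j i) ≠ 0 →
    grWt j - 2 * (p : ℤ) = grWs i + dW ∧ grZt j - 2 * (q : ℤ) = grZs i + dZ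

lemma fin2_monomial_eq (m : Fin 2 →₀ ℕ) :
    m = Finsupp.single (0 : Fin 2) (m 0) + Finsupp.single (1 : Fin 2) (m 1) := by
  ext i
  fin_cases i <;> simp [Finsupp.single_apply]

lemma coeff_eq_coeffAt (m : Fin 2 →₀ ℕ) (f : R2) :
    MvPolynomial.coeff m f = coeffAt (m 0) (m 1) f := by
  rw [coeffAt, ← fin2_monomial_eq]

lemma coeffAt_W_pow (k : ℕ) : coeffAt k 0 (Wv ^ k) ≠ 0 := by
  simp [coeffAt, Wv, MvPolynomial.coeff_X_pow]

lemma coeffAt_Z_pow (k : ℕ) : coeffAt 0 k (Zv ^ k) ≠ 0 := by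
  simp [coeffAt, Zv, MvPolynomial.coeff_X_pow]

lemma stairD_entry_W (n : ℕ) (a b : Fin n → ℕ) (m : ℕ) (h : 2*m+1 < 2*n+1) (hm : m < n) :
    stairD n a b ⟨2*m, by omega⟩ ⟨2*m+1, h⟩ = Wv ^ a ⟨m, hm⟩ := by
  unfold stairD
  rw [dif_pos (by simp), if_pos (by simp)]
  congr 1
  congr 1
  exact Fin.ext (by show (2*m+1)/2 = m; omega)

lemma stairD_entry_Z (n : ℕ) (a b : Fin n → ℕ) (m : ℕ) (h : 2*m+2 < 2*n+1) (hm : m < n) :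
    stairD n a b ⟨2*m+2, by omega⟩ ⟨2*m+1, by omega⟩ = Zv ^ b ⟨m, hm⟩ := by
  unfold stairD
  rw [dif_pos (by simp), if_neg (by simp), if_pos (by simp)]
  congr 1
  congr 1
  exact Fin.ext (by show (2*m+1)/2 = m; omega)

/-- If `f : S → S` is a bigrading-preserving chain map of a bigraded staircase complex
over `F₂[W,Z]` which is a chain homotopy equivalence, then `f` is the identity. -/
theorem stmt_6 (n : ℕ) (a b : Fin n → ℕ) (ha : ∀ i, 0 < a i) (hb : ∀ i, 0 < b i)
    (grW grZ : Fin (2 * n + 1) → ℤ)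
    (hD : hasBideg grW grZ grW grZ (-1) (-1) (stairD n a b))
    (f : Matrix (Fin (2 * n + 1)) (Fin (2 * n + 1)) R2)
    (hf : hasBideg grW grZ grW grZ 0 0 f)
    (hchain : f * stairD n a b = stairD n a b * f)
    (hhtpyEq : ∃ g J J' : Matrix (Fin (2 * n + 1)) (Fin (2 * n + 1)) R2,
      g * stairD n a b = stairD n a b * g ∧
      g * f = 1 + (stairD n a b * J + J * stairD n a b) ∧
      f * g = 1 + (stairD n a b * J' + J' * stairD n a b)) :
    f = 1 := by
  classical
  unfold hasBideg at hD hf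
  -- single step monotonicity
  have hstep : ∀ (k : ℕ) (h : k + 1 < 2 * n + 1),
      grW ⟨k+1, h⟩ < grW ⟨k, by omega⟩ ∧ grZ ⟨k, by omega⟩ < grZ ⟨k+1, h⟩ := by
    intro k h
    rcases Nat.even_or_odd k with ⟨m, hm⟩ | ⟨m, hm⟩
    · have hm' : k = 2 * m := by omega
      subst hm'
      have hmn : m < n := by omega
      have hd := hD ⟨2*m+1, h⟩ ⟨2*m, by omega⟩ (a ⟨m, hmn⟩) 0 (by
        rw [stairD_entry_W n a b m h hmn]; exact coeffAt_W_pow _)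
      have hap := ha ⟨m, hmn⟩
      constructor
      · have := hd.1; push_cast at this ⊢; omega
      · have := hd.2; push_cast at this ⊢; omega
    · have hm' : k = 2 * m + 1 := by omega
      subst hm'
      have hmn : m < n := by omega
      have hd := hD ⟨2*m+1, by omega⟩ ⟨2*m+1+1, h⟩ 0 (b ⟨m, hmn⟩) (by
        rw [show (⟨2*m+1+1, h⟩ : Fin (2*n+1)) = ⟨2*m+2, by omega⟩ from rfl,
          stairD_entry_Z n a b m (by omega) hmn]; exact coeffAt_Z_pow _)
      have hbp := hb ⟨m, hmn⟩
      constructor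
      · have := hd.1; push_cast at this ⊢; omega
      · have := hd.2; push_cast at this ⊢; omega
  -- full monotonicity
  have hchainmono : ∀ (d k : ℕ) (hk : k + d + 1 < 2 * n + 1),
      grW ⟨k+d+1, hk⟩ < grW ⟨k, by omega⟩ ∧ grZ ⟨k, by omega⟩ < grZ ⟨k+d+1, hk⟩ := by
    intro d
    induction d with
    | zero => intro k hk; exact hstep k hk
    | succ d ih =>
      intro k hk
      have h1 := ih k (by omega)
      have h2 := hstep (k+d+1) (by omega)
      exact ⟨lt_trans h2.1 h1.1, lt_trans h1.2 h2.2⟩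
  have hmono : ∀ i j : Fin (2 * n + 1), (i : ℕ) < (j : ℕ) → grW j < grW i ∧ grZ i < grZ j := by
    intro i j hij
    have hj : j = ⟨(i : ℕ) + ((j : ℕ) - (i : ℕ) - 1) + 1, by omega⟩ := Fin.ext (by simp; omega)
    rw [hj]
    exact hchainmono _ _ _
  -- f is diagonal
  have hdiag : ∀ i j : Fin (2 * n + 1), j ≠ i → f j i = 0 := by
    intro i j hne
    refine MvPolynomial.ext _ _ fun m => ?_
    rw [MvPolynomial.coeff_zero]
    by_contra hc
    rw [coeff_eq_coeffAt] at hc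
    obtain ⟨h1, h2⟩ := hf i j (m 0) (m 1) hc
    rcases lt_or_gt_of_ne (fun hv => hne (Fin.ext hv)) with hlt | hlt
    · have := hmono j i hlt
      omega
    · have := hmono i j hlt
      omega
  have hdiag2 : ∀ i, f i i = C (constantCoeff (f i i)) := by
    intro i
    refine MvPolynomial.ext _ _ fun m => ?_
    by_cases hm : m = 0
    · subst hm; simp [MvPolynomial.coeff_zero_C]; rfl
    · rw [MvPolynomial.coeff_C, if_neg (fun h => hm h.symm)]
      by_contra hc
      rw [coeff_eq_coeffAt] at hc
      obtain ⟨h1, h2⟩ := hf i i (m 0) (m 1) hc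
      have hp : m 0 = 0 := by omega
      have hq : m 1 = 0 := by omega
      apply hm
      rw [fin2_monomial_eq m, hp, hq]
      simp
  -- use the homotopy equivalence, evaluated at W = Z = 0
  obtain ⟨g, J, J', hg1, hg2, hg3⟩ := hhtpyEq
  set φ : R2 →+* ZMod 2 := MvPolynomial.constantCoeff
  have hDmap : (stairD n a b).map φ = 0 := by
    ext j i
    simp only [Matrix.map_apply, Matrix.zero_apply]
    unfold stairD
    split_ifs
    · simp only [φ, Wv, map_pow, constantCoeff_X]
      exact zero_pow (ha _).ne'
    · simp only [φ, Zv, map_pow, constantCoeff_X]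
      exact zero_pow (hb _).ne'
    · simp
    · simp
  have hmul : (f.map φ) * (g.map φ) = 1 := by
    have h := congrArg (fun M : Matrix (Fin (2*n+1)) (Fin (2*n+1)) R2 => φ.mapMatrix M) hg3
    simp only [map_mul, map_add, map_one, RingHom.mapMatrix_apply, hDmap,
      Matrix.zero_mul, Matrix.mul_zero, add_zero] at h
    simpa using h
  have hfdiag : f.map φ = Matrix.diagonal (fun k => φ (f k k)) := by
    ext j i
    by_cases h : j = i
    · subst h; simp [Matrix.map_apply]
    · rw [Matrix.map_apply, Matrix.diagonal_apply_ne _ h, hdiag i j h, map_zero]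
  have hc1 : ∀ k, constantCoeff (f k k) = 1 := by
    intro k
    have h2 : ((f.map φ) * (g.map φ)) k k = (1 : Matrix (Fin (2*n+1)) (Fin (2*n+1)) (ZMod 2)) k k := by
      rw [hmul]
    rw [hfdiag, Matrix.diagonal_mul, Matrix.one_apply_eq] at h2
    have hne : φ (f k k) ≠ 0 := by
      intro h0
      rw [h0, zero_mul] at h2
      exact one_ne_zero h2.symm
    have : ∀ x : ZMod 2, x ≠ 0 → x = 1 := by decide
    exact this _ hne
  -- conclude
  ext j i
  by_cases h : j = i
  · subst h
    rw [hdiag2 j, hc1 j, Matrix.one_apply_eq, map_one]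
  · rw [hdiag i j h, Matrix.one_apply_ne h]

end
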